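/- Let q ≥ 2 be an integer, 0 ≤ β ≤ 1, and d a positive integer with q > (1-β)d and d ≥ q-1. Then for any nonnegative reals x_2,...,x_q with x_2+...+x_q = d, one has 1/(1 + ∑_{i=2}^q β^{x_i}) ≤ 1/(q - (1-β)d), where β^0 is interpreted as 1 (including when β=0). -/

import Mathlib

open Real

lemma convexOn_rpow_const {β : ℝ} (hβ : 0 < β) :
    ConvexOn ℝ Set.univ (fun t : ℝ => β ^ t) := by
  have h : (fun t : ℝ => β ^ t) = fun t : ℝ => Real.exp (Real.log β * t) := by
    funext t
    rw [Real.rpow_def_of_pos hβ]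
  rw [h]
  have := convexOn_exp.comp_affineMap
    ((LinearMap.smulRight (LinearMap.id : ℝ →ₗ[ℝ] ℝ) (Real.log β)).toAffineMap)
  simpa [Function.comp_def, mul_comm] using this

/-- Upper bound on the Potts marginal in the case `d ≥ q - 1`, with real exponents. -/
theorem potts_marginal_upper_high_degree (q : ℕ) (hq : 2 ≤ q) (β : ℝ)
    (hβ0 : 0 ≤ β) (hβ1 : β ≤ 1) (d : ℕ) (hd0 : 0 < d)
    (hqd : (q : ℝ) > (1 - β) * d) (hdq : q - 1 ≤ d)
    (x : Fin (q - 1) → ℝ) (hx : ∀ i, 0 ≤ x i) (hsum : ∑ i, x i = (d : ℝ)) :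
    1 / (1 + ∑ i, β ^ (x i)) ≤ 1 / ((q : ℝ) - (1 - β) * d) := by
  have hden : (0 : ℝ) < (q : ℝ) - (1 - β) * d := by linarith
  have hn : (1 : ℕ) ≤ q - 1 := by omega
  have hncast : ((q - 1 : ℕ) : ℝ) = (q : ℝ) - 1 := by
    push_cast [Nat.cast_sub (by omega : 1 ≤ q)]; ring
  have hnd : ((q : ℝ) - 1) ≤ (d : ℝ) := by
    rw [← hncast]; exact_mod_cast hdq
  have hnpos : (0 : ℝ) < (q : ℝ) - 1 := by
    have : (2 : ℝ) ≤ (q : ℝ) := by exact_mod_cast hq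
    linarith
  -- key inequality: sum of rpow's is at least (q-1) - (1-β) d
  have key : ((q : ℝ) - 1) - (1 - β) * d ≤ ∑ i, β ^ (x i) := by
    rcases eq_or_lt_of_le hβ0 with hβz | hβpos
    · -- β = 0 : sum is nonneg, LHS ≤ 0 since d ≥ q-1
      have h1 : ((q : ℝ) - 1) - (1 - β) * d ≤ 0 := by rw [← hβz]; linarith
      have h2 : (0 : ℝ) ≤ ∑ i, β ^ (x i) :=
        Finset.sum_nonneg fun i _ => Real.rpow_nonneg hβ0 _
      linarith
    · -- β > 0 : use convexity (Jensen) then Bernoulli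
      set n : ℝ := (q : ℝ) - 1 with hn'
      have hjensen : β ^ ((d : ℝ) / n) ≤ (∑ i, β ^ (x i)) / n := by
        have := (convexOn_rpow_const hβpos).map_sum_le
          (t := Finset.univ) (w := fun _ : Fin (q - 1) => 1 / n) (p := x)
          (fun i _ => by positivity)
          (by
            rw [Finset.sum_const, Finset.card_univ, Fintype.card_fin, nsmul_eq_mul, hncast]
            field_simp)
          (fun i _ => Set.mem_univ _)
        have hsum' : ∑ i, (1 / n) • x i = (d : ℝ) / n := by
          simp only [smul_eq_mul, ← Finset.mul_sum, hsum]
          ring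
        rw [hsum'] at this
        calc β ^ ((d : ℝ) / n) ≤ ∑ i, (1 / n) * β ^ (x i) := this
          _ = (∑ i, β ^ (x i)) / n := by rw [← Finset.mul_sum]; ring
      have hexp : (1 : ℝ) ≤ (d : ℝ) / n := by
        rw [le_div_iff₀ hnpos]; simpa using hnd
      have hbern : 1 + ((d : ℝ) / n) * (β - 1) ≤ β ^ ((d : ℝ) / n) := by
        have := one_add_mul_self_le_rpow_one_add (s := β - 1) (by linarith) hexp
        simpa using this
      have h3 : n * (1 + ((d : ℝ) / n) * (β - 1)) ≤ ∑ i, β ^ (x i) := by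
        have := mul_le_mul_of_nonneg_left (hbern.trans hjensen) hnpos.le
        calc n * (1 + ((d : ℝ) / n) * (β - 1)) ≤ n * ((∑ i, β ^ (x i)) / n) := this
          _ = ∑ i, β ^ (x i) := by field_simp
      have h4 : n * (1 + ((d : ℝ) / n) * (β - 1)) = n - (1 - β) * d := by
        field_simp
        ring
      linarith [h3, h4.symm.le]
  have hpos2 : (0 : ℝ) < 1 + ∑ i, β ^ (x i) := by
    have : (0 : ℝ) ≤ ∑ i, β ^ (x i) :=
      Finset.sum_nonneg fun i _ => Real.rpow_nonneg hβ0 _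
    linarith
  apply one_div_le_one_div_of_le hden
  linarith
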